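/- Let n be even, p > q > 0, and let L̄ be the expected Laplacian of the two-block stochastic block model: L̄ = (n/2)(p+q)I - Ā, where Ā_{ij} = p if i,j are in the same block and q otherwise. Let s ∈ R^n be +1 on the first block and -1 on the second block. Then s is an eigenvector of L̄ with eigenvalue nq, and the homogeneous polarization-disagreement PD(α) = s^T (I+α^{-1}L̄)^{-1}(I+L̄)(I+α^{-1}L̄)^{-1} s equals α^2(1+nq)n/(nq+α)^2. -/

import Mathlib

open Matrix Finset

theorem stmt9 {n : ℕ} (hn : Even n) (hn0 : 0 < n) (p q α : ℝ)
    (hq : 0 < q) (hpq : q < p) (hα : 0 < α) :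
    let A : Matrix (Fin n) (Fin n) ℝ :=
      Matrix.of fun i j => if ((i : ℕ) < n / 2 ↔ (j : ℕ) < n / 2) then p else q
    let Lb := ((n : ℝ) / 2 * (p + q)) • (1 : Matrix (Fin n) (Fin n) ℝ) - A
    let s : Fin n → ℝ := fun i => if (i : ℕ) < n / 2 then 1 else -1
    Lb *ᵥ s = ((n : ℝ) * q) • s ∧
    s ⬝ᵥ (((1 + α⁻¹ • Lb)⁻¹ * (1 + Lb) * (1 + α⁻¹ • Lb)⁻¹) *ᵥ s)
      = α ^ 2 * (1 + (n : ℝ) * q) * n / ((n : ℝ) * q + α) ^ 2 := by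
  intro A Lb s
  have hLbdef : Lb = ((n : ℝ) / 2 * (p + q)) • (1 : Matrix (Fin n) (Fin n) ℝ) - A := rfl
  obtain ⟨k, hk⟩ := hn
  have hnk : n = 2 * k := by omega
  have hh : n / 2 = k := by omega
  set h := n / 2 with hhdef
  -- the two blocks
  set P : Finset (Fin n) := univ.filter (fun i : Fin n => (i : ℕ) < h) with hP
  set P' : Finset (Fin n) := univ.filter (fun i : Fin n => ¬ (i : ℕ) < h) with hP'
  have hcardP : P.card = k := by
    have : P = Finset.attachFin (Finset.range h) (fun m hm => by
        simp only [Finset.mem_range] at hm; omega) := by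
      ext a; simp [hP, Finset.mem_attachFin]
    rw [this, Finset.card_attachFin, Finset.card_range, hh]
  have hcardP' : P'.card = k := by
    have := Finset.card_filter_add_card_filter_not
      (s := (univ : Finset (Fin n))) (p := fun i : Fin n => (i : ℕ) < h)
    simp only [Finset.card_univ, Fintype.card_fin] at this
    rw [← hP, ← hP'] at this
    omega
  -- mulVec of A on any vector
  have hAmul : ∀ (x : Fin n → ℝ) (i : Fin n), (A *ᵥ x) i =
      (if (i : ℕ) < h then p else q) * (∑ j ∈ P, x j)
        + (if (i : ℕ) < h then q else p) * (∑ j ∈ P', x j) := by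
    intro x i
    rw [mulVec, dotProduct,
      ← Finset.sum_filter_add_sum_filter_not univ (fun j : Fin n => (j : ℕ) < h)]
    rw [← hP, ← hP', Finset.mul_sum, Finset.mul_sum]
    congr 1
    · refine Finset.sum_congr rfl fun j hj => ?_
      rw [hP, Finset.mem_filter] at hj
      by_cases hi : (i : ℕ) < h <;> simp [A, ← hhdef, hi, hj.2]
    · refine Finset.sum_congr rfl fun j hj => ?_
      rw [hP', Finset.mem_filter] at hj
      by_cases hi : (i : ℕ) < h <;> simp [A, ← hhdef, hi, hj.2]
  -- sums of s over blocks
  have hsP : ∑ j ∈ P, s j = k := by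
    rw [show ∑ j ∈ P, s j = ∑ j ∈ P, 1 from Finset.sum_congr rfl fun j hj => by
      rw [hP, Finset.mem_filter] at hj; simp [s, ← hhdef, hj.2]]
    simp [hcardP]
  have hsP' : ∑ j ∈ P', s j = -k := by
    rw [show ∑ j ∈ P', s j = ∑ j ∈ P', (-1 : ℝ) from Finset.sum_congr rfl fun j hj => by
      rw [hP', Finset.mem_filter] at hj; simp [s, ← hhdef, hj.2]]
    simp [hcardP']
  -- part 1
  have part1 : Lb *ᵥ s = ((n : ℝ) * q) • s := by
    funext i
    have : (Lb *ᵥ s) i = ((n : ℝ) / 2 * (p + q)) * s i - (A *ᵥ s) i := by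
      simp [Lb, sub_mulVec, smul_mulVec]
    rw [this, hAmul s i, hsP, hsP']
    have hcast : (n : ℝ) = 2 * k := by exact_mod_cast congrArg Nat.cast hnk
    by_cases hi : (i : ℕ) < h <;> simp [s, ← hhdef, hi, hcast] <;> ring
  refine ⟨part1, ?_⟩
  -- quadratic form of A
  have hAquad : ∀ x : Fin n → ℝ, x ⬝ᵥ (A *ᵥ x) =
      p * ((∑ j ∈ P, x j) ^ 2 + (∑ j ∈ P', x j) ^ 2)
        + 2 * q * (∑ j ∈ P, x j) * (∑ j ∈ P', x j) := by
    intro x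
    rw [dotProduct, ← Finset.sum_filter_add_sum_filter_not univ
      (fun j : Fin n => (j : ℕ) < h), ← hP, ← hP']
    have e1 : ∑ i ∈ P, x i * (A *ᵥ x) i
        = (∑ j ∈ P, x j) * (p * (∑ j ∈ P, x j) + q * (∑ j ∈ P', x j)) := by
      rw [Finset.sum_mul]
      refine Finset.sum_congr rfl fun i hi => ?_
      rw [hP, Finset.mem_filter] at hi
      rw [hAmul x i, if_pos hi.2, if_pos hi.2]
    have e2 : ∑ i ∈ P', x i * (A *ᵥ x) i
        = (∑ j ∈ P', x j) * (q * (∑ j ∈ P, x j) + p * (∑ j ∈ P', x j)) := by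
      rw [Finset.sum_mul]
      refine Finset.sum_congr rfl fun i hi => ?_
      rw [hP', Finset.mem_filter] at hi
      rw [hAmul x i, if_neg hi.2, if_neg hi.2]
    rw [e1, e2]; ring
  -- Lb is positive semidefinite
  have hAherm : A.IsHermitian := by
    ext i j
    by_cases hi : (i : ℕ) < h <;> by_cases hj : (j : ℕ) < h <;>
      simp [Matrix.conjTranspose_apply, A, ← hhdef, hi, hj]
  have hLbherm : Lb.IsHermitian := by
    show Lbᴴ = Lb
    rw [hLbdef, conjTranspose_sub, conjTranspose_smul, conjTranspose_one, hAherm,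
      star_trivial]
  have hLbpsd : Lb.PosSemidef := by
    refine Matrix.PosSemidef.of_dotProduct_mulVec_nonneg hLbherm fun x => ?_
    have hstar : star x = x := by simp
    rw [hstar]
    have hform : x ⬝ᵥ (Lb *ᵥ x)
        = (n : ℝ) / 2 * (p + q) * (∑ i, x i ^ 2) - x ⬝ᵥ (A *ᵥ x) := by
      simp only [Lb, sub_mulVec, smul_mulVec, one_mulVec, dotProduct_sub,
        dotProduct_smul]
      congr 1
      simp [dotProduct, sq, smul_eq_mul, Finset.mul_sum]
    rw [hform, hAquad x]
    set S1 := ∑ j ∈ P, x j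
    set S2 := ∑ j ∈ P', x j
    have hQsplit : ∑ i, x i ^ 2 = (∑ i ∈ P, x i ^ 2) + ∑ i ∈ P', x i ^ 2 := by
      rw [← Finset.sum_filter_add_sum_filter_not univ (fun j : Fin n => (j : ℕ) < h),
        ← hP, ← hP']
    have hcs1 : S1 ^ 2 ≤ (k : ℝ) * ∑ i ∈ P, x i ^ 2 := by
      have := sq_sum_le_card_mul_sum_sq (s := P) (f := x)
      rw [hcardP] at this; exact_mod_cast this
    have hcs2 : S2 ^ 2 ≤ (k : ℝ) * ∑ i ∈ P', x i ^ 2 := by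
      have := sq_sum_le_card_mul_sum_sq (s := P') (f := x)
      rw [hcardP'] at this; exact_mod_cast this
    have hcast : (n : ℝ) = 2 * k := by exact_mod_cast congrArg Nat.cast hnk
    rw [hQsplit, hcast]
    have hab : 2 * S1 * S2 ≤ S1 ^ 2 + S2 ^ 2 := two_mul_le_add_sq S1 S2
    nlinarith [hcs1, hcs2, hab, hq.le, hpq.le, sq_nonneg (S1 - S2), sq_nonneg (S1 + S2)]
  -- M := 1 + α⁻¹ • Lb is positive definite
  set M : Matrix (Fin n) (Fin n) ℝ := 1 + α⁻¹ • Lb with hM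
  have hMpd : M.PosDef := by
    have hsmul : (α⁻¹ • Lb).PosSemidef := by
      refine Matrix.PosSemidef.of_dotProduct_mulVec_nonneg ?_ fun x => ?_
      · show _ᴴ = _
        rw [conjTranspose_smul, hLbherm, star_trivial]
      rw [smul_mulVec, dotProduct_smul]
      exact smul_nonneg (by positivity) (hLbpsd.dotProduct_mulVec_nonneg x)
    exact Matrix.PosDef.add_posSemidef Matrix.PosDef.one hsmul
  have hMunit : IsUnit M.det := hMpd.det_pos.ne'.isUnit
  have hnq : (0 : ℝ) < (n : ℝ) * q := by positivity
  set c : ℝ := 1 + α⁻¹ * ((n : ℝ) * q) with hc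
  have hc0 : c ≠ 0 := by positivity
  have hMs : M *ᵥ s = c • s := by
    rw [hM, add_mulVec, one_mulVec, smul_mulVec, part1, hc, add_smul, one_smul,
      smul_smul]
  have hMinvs : M⁻¹ *ᵥ s = c⁻¹ • s := by
    have h1 : M⁻¹ *ᵥ (M *ᵥ s) = s := by
      rw [mulVec_mulVec, Matrix.nonsing_inv_mul M hMunit, one_mulVec]
    rw [hMs, mulVec_smul] at h1
    have h2 := congrArg (fun v => c⁻¹ • v) h1
    simp only [smul_smul, inv_mul_cancel₀ hc0, one_smul] at h2
    exact h2
  have hLs : (1 + Lb) *ᵥ s = (1 + (n : ℝ) * q) • s := by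
    rw [add_mulVec, one_mulVec, part1, add_smul, one_smul]
  have hdot : s ⬝ᵥ s = (n : ℝ) := by
    have : ∀ i : Fin n, s i * s i = 1 := fun i => by
      by_cases hi : (i : ℕ) < h <;> simp [s, ← hhdef, hi]
    simp [dotProduct, this]
  have hfinal : (M⁻¹ * (1 + Lb) * M⁻¹) *ᵥ s
      = (c⁻¹ * ((1 + (n : ℝ) * q) * c⁻¹)) • s := by
    rw [← mulVec_mulVec, ← mulVec_mulVec, hMinvs, mulVec_smul, hLs, smul_smul,
      mulVec_smul, hMinvs, smul_smul, mul_assoc]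
  rw [hfinal, dotProduct_smul, hdot, smul_eq_mul, hc]
  have hα0 : α ≠ 0 := hα.ne'
  have hden : (n : ℝ) * q + α ≠ 0 := by positivity
  field_simp
  ring
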